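/- (1) The operator L(A,a,b,κ) is densely defined if and only if the n-data (a,b,κ) satisfy condition (Aₙ*): for every d ∈ ℂⁿ, if b̃d ∈ D(A*) and κ*d = (⟨A*(b̃d), ãe_j⟩)_{j=1}^n (where κ* is the adjoint matrix of κ), then d = 0. (2) If (Aₙ*) holds, then the Hilbert-space adjoint of L(A,a,b,κ) equals L(A*, b, a, κ*), i.e., the operator constructed from the n-data (b̃, ã, κ*) for A*. -/

import Mathlib

open Complex

noncomputable section

variable {H : Type*} [NormedAddCommGroup H] [InnerProductSpace ℂ H] [CompleteSpace H]

/-- The graph of the singular perturbation `L(T, a, b, κ)` of an (unbounded) operator with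
domain `dom` and action `Tfun`, built from the `n`-data `(ã, b̃, κ)`:
pairs `(y₀ + ãc, T y₀)` with `y₀ ∈ dom`, `c ∈ ℂⁿ` and `κc + (⟨T y₀, b̃ e_j⟩)_j = 0`. -/
def pertGraph (n : ℕ) (dom : Submodule ℂ H) (Tfun : dom → H)
    (aT bT : (Fin n → ℂ) →ₗ[ℂ] H) (κ : Matrix (Fin n) (Fin n) ℂ) : Set (H × H) :=
  {p | ∃ (y₀ : dom) (c : Fin n → ℂ),
    p.1 = (y₀ : H) + aT c ∧ p.2 = Tfun y₀ ∧
    ∀ j, κ.mulVec c j + inner (𝕜 := ℂ) (bT (Pi.single j 1)) (Tfun y₀) = 0}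

/-- Condition `(Aₙ)` on the `n`-data `(ã, b̃, κ)` for the operator `A`:
if `ãc ∈ D(A)` and `κc = (⟨A(ãc), b̃e_j⟩)_j`, then `c = 0`. -/
def CondA (n : ℕ) (A : H →ₗ.[ℂ] H)
    (aT bT : (Fin n → ℂ) →ₗ[ℂ] H) (κ : Matrix (Fin n) (Fin n) ℂ) : Prop :=
  ∀ (c : Fin n → ℂ) (h : aT c ∈ A.domain),
    (∀ j, κ.mulVec c j = inner (𝕜 := ℂ) (bT (Pi.single j 1)) (A ⟨aT c, h⟩)) → c = 0

/-- `dim (G / (G ∩ G')) = n`, where the intersection is viewed inside `G`. -/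
def QuotRankEq (G G' : Submodule ℂ (H × H)) (n : ℕ) : Prop :=
  Module.rank ℂ (↥G ⧸ (G ⊓ G').comap G.subtype) = (n : Cardinal)

/-- `L` is a balanced rank `n` singular perturbation of `A` (in terms of their graphs). -/
def IsBalancedPert (n : ℕ) (Ga Gl : Submodule ℂ (H × H)) : Prop :=
  QuotRankEq Ga Gl n ∧ QuotRankEq Gl Ga n
/-- Condition `(Aₙ*)` on the n-data `(ã, b̃, κ)` for `A`:
if `b̃d ∈ D(A*)` and `κ*d = (⟨A*(b̃d), ãe_j⟩)_j`, then `d = 0`. -/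
def CondAstar (n : ℕ) (A : H →ₗ.[ℂ] H)
    (aT bT : (Fin n → ℂ) →ₗ[ℂ] H) (κ : Matrix (Fin n) (Fin n) ℂ) : Prop :=
  ∀ (d : Fin n → ℂ) (h : bT d ∈ A.adjoint.domain),
    (∀ j, κ.conjTranspose.mulVec d j = inner (𝕜 := ℂ) (aT (Pi.single j 1)) (A.adjoint ⟨bT d, h⟩)) →
    d = 0


section AuxPert
set_option linter.unusedSectionVars false
variable {n : ℕ}
local notation "⟪" x ", " y "⟫" => @inner ℂ _ _ x y

private lemma map_eq_sum' (T : (Fin n → ℂ) →ₗ[ℂ] H) (x : Fin n → ℂ) :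
    T x = ∑ j, x j • T (Pi.single j 1) := by
  conv_lhs => rw [← Finset.univ_sum_single x]
  rw [map_sum]
  refine Finset.sum_congr rfl fun j _ => ?_
  rw [← map_smul]
  congr 1
  ext k
  simp [Pi.single_apply]

private lemma inner_comb_left' (T : (Fin n → ℂ) →ₗ[ℂ] H) (x : Fin n → ℂ) (v : H) :
    ⟪T x, v⟫ = ∑ j, (starRingEnd ℂ) (x j) * ⟪T (Pi.single j 1), v⟫ := by
  rw [map_eq_sum' T x, sum_inner]
  simp [inner_smul_left]

private lemma inner_comb_right' (T : (Fin n → ℂ) →ₗ[ℂ] H) (x : Fin n → ℂ) (v : H) :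
    ⟪v, T x⟫ = ∑ j, x j * ⟪v, T (Pi.single j 1)⟫ := by
  rw [map_eq_sum' T x, inner_sum]
  simp [inner_smul_right]

private lemma alg1' (κ : Matrix (Fin n) (Fin n) ℂ) (c d : Fin n → ℂ) :
    ∑ j, c j * (starRingEnd ℂ) (κ.conjTranspose.mulVec d j)
      = ∑ j, (starRingEnd ℂ) (d j) * κ.mulVec c j := by
  simp only [Matrix.mulVec, dotProduct, Matrix.conjTranspose_apply, map_sum, map_mul,
    Complex.star_def, Complex.conj_conj, Finset.mul_sum]
  rw [Finset.sum_comm]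
  refine Finset.sum_congr rfl fun k _ => Finset.sum_congr rfl fun j _ => ?_
  ring

private lemma alg2' (κ : Matrix (Fin n) (Fin n) ℂ) (c d : Fin n → ℂ) :
    ∑ j, (starRingEnd ℂ) (c j) * κ.conjTranspose.mulVec d j
      = ∑ j, d j * (starRingEnd ℂ) (κ.mulVec c j) := by
  simp only [Matrix.mulVec, dotProduct, Matrix.conjTranspose_apply, map_sum, map_mul,
    Complex.star_def, Complex.conj_conj, Finset.mul_sum]
  rw [Finset.sum_comm]
  refine Finset.sum_congr rfl fun k _ => Finset.sum_congr rfl fun j _ => ?_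
  ring

private lemma single_sum' (f : Fin n → ℂ) (k : Fin n) :
    ∑ j, (starRingEnd ℂ) ((Pi.single k 1 : Fin n → ℂ) j) * f j = f k := by
  have : ∀ j, (starRingEnd ℂ) ((Pi.single k 1 : Fin n → ℂ) j) * f j = if j = k then f j else 0 := by
    intro j
    by_cases h : j = k <;> simp [Pi.single_apply, h]
  rw [Finset.sum_congr rfl fun j _ => this j]
  simp

private lemma bsurj' (bT : (Fin n → ℂ) →ₗ[ℂ] H) (hbInj : Function.Injective bT) (c : Fin n → ℂ) :
    ∃ v : H, ∀ j, ⟪bT (Pi.single j 1), v⟫ = c j := by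
  set N : (Fin n → ℂ) →ₗ[ℂ] (Fin n → ℂ) :=
    LinearMap.pi (fun j => (innerSL ℂ (bT (Pi.single j 1))).toLinearMap.comp bT) with hN
  have hNinj : Function.Injective N := by
    intro x y hxy
    have hxy' : N (x - y) = 0 := by rw [map_sub, hxy, sub_self]
    set z := x - y with hzdef
    have hz : ∀ j, ⟪bT (Pi.single j 1), bT z⟫ = 0 := fun j => congrFun hxy' j
    have : ⟪bT z, bT z⟫ = 0 := by
      rw [inner_comb_left']
      simp [hz]
    have hbz : bT z = 0 := inner_self_eq_zero.mp this
    have : bT z = bT 0 := by simpa using hbz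
    exact sub_eq_zero.mp (hbInj this)
  obtain ⟨x, hx⟩ := (LinearMap.injective_iff_surjective.mp hNinj) c
  exact ⟨bT x, fun j => congrFun hx j⟩

private lemma bmem_range' (bT : (Fin n → ℂ) →ₗ[ℂ] H) (u : H)
    (h : ∀ v : H, (∀ j, ⟪bT (Pi.single j 1), v⟫ = 0) → ⟪v, u⟫ = 0) : ∃ d, bT d = u := by
  have hu : u ∈ (LinearMap.range bT)ᗮᗮ := by
    rw [Submodule.mem_orthogonal]
    intro v hv
    apply h
    intro j
    exact hv _ (LinearMap.mem_range_self _ _)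
  rw [Submodule.orthogonal_orthogonal] at hu
  exact hu

end AuxPert

/-- **Proposition.** (1) `L(A,a,b,κ)` is densely defined iff the n-data satisfy `(Aₙ*)`;
(2) if `(Aₙ*)` holds, then the Hilbert-space adjoint of `L(A,a,b,κ)` equals
`L(A*, b, a, κ*)`. -/
theorem pert_densely_defined_iff_and_adjoint
    (n : ℕ) (A : H →ₗ.[ℂ] H)
    (hdense : Dense (A.domain : Set H))
    (hclosed : IsClosed (A.graph : Set (H × H)))
    -- 0 lies in the resolvent set of A
    (Ainv : H →L[ℂ] H)
    (hAinv1 : ∀ x : A.domain, Ainv (A x) = (x : H))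
    (hAinv2 : ∀ v : H, ∃ h : Ainv v ∈ A.domain, A ⟨Ainv v, h⟩ = v)
    -- the n-data
    (aT bT : (Fin n → ℂ) →ₗ[ℂ] H) (κ : Matrix (Fin n) (Fin n) ℂ)
    (haInj : Function.Injective aT) (hbInj : Function.Injective bT)
    (hA_n : CondA n A aT bT κ)
    -- L = L(A,a,b,κ)
    (L : H →ₗ.[ℂ] H)
    (hL : (L.graph : Set (H × H)) = pertGraph n A.domain (fun y₀ => A y₀) aT bT κ) :
    -- (1)
    (Dense (L.domain : Set H) ↔ CondAstar n A aT bT κ) ∧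
    -- (2)
    (CondAstar n A aT bT κ →
      (L.adjoint.graph : Set (H × H))
        = pertGraph n A.adjoint.domain (fun u₀ => A.adjoint u₀) bT aT κ.conjTranspose) := by
  classical
  have hbSurj : ∀ c : Fin n → ℂ, ∃ v : H, ∀ j,
      inner (𝕜 := ℂ) (bT (Pi.single j 1)) v = c j := bsurj' bT hbInj
  set B := ContinuousLinearMap.adjoint Ainv with hBdef
  have hBv : ∀ v w : H, inner (𝕜 := ℂ) v (B w) = inner (𝕜 := ℂ) (Ainv v) w := fun v w =>
    ContinuousLinearMap.adjoint_inner_right _ _ _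
  have hBv' : ∀ v w : H, inner (𝕜 := ℂ) (B w) v = inner (𝕜 := ℂ) w (Ainv v) := fun v w =>
    ContinuousLinearMap.adjoint_inner_left _ _ _
  have hFA : ∀ (x : A.adjoint.domain) (y : A.domain),
      inner (𝕜 := ℂ) (A.adjoint x) (y : H) = inner (𝕜 := ℂ) (x : H) (A y) :=
    LinearPMap.adjoint_isFormalAdjoint hdense
  -- (A⁻¹)* is a right inverse for A*
  have h1 : ∀ w : H, ∃ h : B w ∈ A.adjoint.domain, A.adjoint ⟨B w, h⟩ = w := by
    intro w
    have key : ∀ x : A.domain, inner (𝕜 := ℂ) w (x : H) = inner (𝕜 := ℂ) (B w) (A x) := by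
      intro x
      rw [hBv', hAinv1 x]
    have hmem : B w ∈ A.adjoint.domain :=
      LinearPMap.mem_adjoint_domain_of_exists _ ⟨w, key⟩
    exact ⟨hmem, LinearPMap.adjoint_apply_eq hdense ⟨B w, hmem⟩ key⟩
  -- (A⁻¹)* is a left inverse for A*
  have h2 : ∀ x : A.adjoint.domain, B (A.adjoint x) = (x : H) := by
    intro x
    apply ext_inner_left ℂ
    intro v
    rw [hBv]
    obtain ⟨hv, hAv⟩ := hAinv2 v
    calc inner (𝕜 := ℂ) (Ainv v) (A.adjoint x)
        = (starRingEnd ℂ) (inner (𝕜 := ℂ) (A.adjoint x) (Ainv v)) := (inner_conj_symm _ _).symm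
      _ = (starRingEnd ℂ) (inner (𝕜 := ℂ) (x : H) (A ⟨Ainv v, hv⟩)) := by rw [hFA x ⟨Ainv v, hv⟩]
      _ = (starRingEnd ℂ) (inner (𝕜 := ℂ) (x : H) v) := by rw [hAv]
      _ = inner (𝕜 := ℂ) v (x : H) := inner_conj_symm _ _
  -- membership in the domain of L
  have hLmem : ∀ (y₀ : A.domain) (c : Fin n → ℂ),
      (∀ j, κ.mulVec c j + inner (𝕜 := ℂ) (bT (Pi.single j 1)) (A y₀) = 0) →
      ∃ h : ((y₀ : H) + aT c) ∈ L.domain, L ⟨(y₀ : H) + aT c, h⟩ = A y₀ := by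
    intro y₀ c hc
    have hg : ((y₀ : H) + aT c, A y₀) ∈ L.graph := by
      rw [← SetLike.mem_coe, hL]
      exact ⟨y₀, c, rfl, rfl, hc⟩
    rw [LinearPMap.mem_graph_iff] at hg
    obtain ⟨z, hz1, hz2⟩ := hg
    have hz1' : (z : H) = (y₀ : H) + aT c := hz1
    have hmem : ((y₀ : H) + aT c) ∈ L.domain := hz1' ▸ z.2
    refine ⟨hmem, ?_⟩
    have he : (⟨(y₀ : H) + aT c, hmem⟩ : L.domain) = z := Subtype.ext hz1.symm
    rw [he]
    exact hz2
  have hLmem' : ∀ (v : H) (c : Fin n → ℂ),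
      (∀ j, κ.mulVec c j + inner (𝕜 := ℂ) (bT (Pi.single j 1)) v = 0) →
      ∃ h : (Ainv v + aT c) ∈ L.domain, L ⟨Ainv v + aT c, h⟩ = v := by
    intro v c hc
    obtain ⟨hv, hAv⟩ := hAinv2 v
    obtain ⟨hmem, hval⟩ := hLmem ⟨Ainv v, hv⟩ c (fun j => by rw [hAv]; exact hc j)
    exact ⟨hmem, by rw [hval, hAv]⟩
  -- decomposition of elements of the domain of L
  have hLdecomp : ∀ x : L.domain, ∃ (y₀ : A.domain) (c : Fin n → ℂ),
      (x : H) = (y₀ : H) + aT c ∧ L x = A y₀ ∧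
      ∀ j, κ.mulVec c j + inner (𝕜 := ℂ) (bT (Pi.single j 1)) (A y₀) = 0 := by
    intro x
    have hg : ((x : H), L x) ∈ L.graph := L.mem_graph x
    rw [← SetLike.mem_coe, hL] at hg
    obtain ⟨y₀, c, ha, hb, hcc⟩ := hg
    exact ⟨y₀, c, ha, hb, hcc⟩
  -- If d witnesses a failure of (Aₙ*), then A* (b̃ d) is orthogonal to D(L)
  have key1 : ∀ (u : H) (d : Fin n → ℂ) (hd : bT d ∈ A.adjoint.domain),
      A.adjoint ⟨bT d, hd⟩ = u →
      (∀ j, κ.conjTranspose.mulVec d j = inner (𝕜 := ℂ) (aT (Pi.single j 1)) u) →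
      ∀ x : L.domain, inner (𝕜 := ℂ) (x : H) u = 0 := by
    intro u d hd hu hk x
    obtain ⟨y₀, c, hx1, _, hcon⟩ := hLdecomp x
    have hbe : ∀ j, inner (𝕜 := ℂ) (bT (Pi.single j 1)) (A y₀) = -(κ.mulVec c j) :=
      fun j => eq_neg_of_add_eq_zero_right (hcon j)
    rw [hx1, inner_add_left]
    have e1 : inner (𝕜 := ℂ) (y₀ : H) u = ∑ j, d j * (starRingEnd ℂ) (-(κ.mulVec c j)) := by
      rw [← hu, ← inner_conj_symm, hFA ⟨bT d, hd⟩ y₀, inner_comb_left' bT d (A y₀), map_sum]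
      refine Finset.sum_congr rfl fun j _ => ?_
      rw [map_mul, Complex.conj_conj, hbe j]
    have e2 : inner (𝕜 := ℂ) (aT c) u
        = ∑ j, (starRingEnd ℂ) (c j) * κ.conjTranspose.mulVec d j := by
      rw [inner_comb_left' aT c u]
      exact Finset.sum_congr rfl fun j _ => by rw [hk j]
    rw [e1, e2, alg2' κ c d, ← Finset.sum_add_distrib]
    apply Finset.sum_eq_zero
    intro j _
    simp only [map_neg]
    ring
  -- conversely, any vector orthogonal to D(L) arises from such a d
  have key2 : ∀ u : H, (∀ x : L.domain, inner (𝕜 := ℂ) (x : H) u = 0) →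
      ∃ (d : Fin n → ℂ) (hd : bT d ∈ A.adjoint.domain),
        A.adjoint ⟨bT d, hd⟩ = u ∧
        ∀ j, κ.conjTranspose.mulVec d j = inner (𝕜 := ℂ) (aT (Pi.single j 1)) u := by
    intro u horth
    obtain ⟨hBu, hBval⟩ := h1 u
    have ha : ∀ v : H, (∀ j, inner (𝕜 := ℂ) (bT (Pi.single j 1)) v = 0) →
        inner (𝕜 := ℂ) v (B u) = 0 := by
      intro v hv
      rw [hBv]
      obtain ⟨hmem, hval⟩ := hLmem' v 0 (fun j => by simpa using hv j)
      have h0 := horth ⟨Ainv v + aT 0, hmem⟩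
      simpa using h0
    obtain ⟨d, hdu⟩ := bmem_range' bT (B u) ha
    have hd : bT d ∈ A.adjoint.domain := by rw [hdu]; exact hBu
    have hval : A.adjoint ⟨bT d, hd⟩ = u := by
      have he : (⟨bT d, hd⟩ : A.adjoint.domain) = ⟨B u, hBu⟩ := Subtype.ext hdu
      rw [he]
      exact hBval
    refine ⟨d, hd, hval, ?_⟩
    intro k
    have main : ∀ c : Fin n → ℂ,
        ∑ j, (starRingEnd ℂ) (c j) * κ.conjTranspose.mulVec d j
          = ∑ j, (starRingEnd ℂ) (c j) * inner (𝕜 := ℂ) (aT (Pi.single j 1)) u := by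
      intro c
      obtain ⟨v, hv⟩ := hbSurj (fun j => -(κ.mulVec c j))
      obtain ⟨hmem, _⟩ := hLmem' v c (fun j => by rw [hv j]; ring)
      have h0 := horth ⟨Ainv v + aT c, hmem⟩
      rw [inner_add_left] at h0
      have hAvu : inner (𝕜 := ℂ) (Ainv v) u
          = ∑ j, d j * (starRingEnd ℂ) (-(κ.mulVec c j)) := by
        rw [← hBv, ← hdu, inner_comb_right' bT d v]
        refine Finset.sum_congr rfl fun j _ => ?_
        rw [← inner_conj_symm, hv j]
      have haTu : inner (𝕜 := ℂ) (aT c) u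
          = ∑ j, (starRingEnd ℂ) (c j) * inner (𝕜 := ℂ) (aT (Pi.single j 1)) u :=
        inner_comb_left' aT c u
      rw [hAvu, haTu] at h0
      have hneg : ∑ j, d j * (starRingEnd ℂ) (-(κ.mulVec c j))
          = -∑ j, d j * (starRingEnd ℂ) (κ.mulVec c j) := by
        simp [map_neg, mul_neg]
      rw [alg2' κ c d]
      rw [hneg] at h0
      linear_combination -h0
    have := main (Pi.single k 1)
    rwa [single_sum', single_sum'] at this
  -- Part (1)
  have hdense_iff : Dense (L.domain : Set H) ↔ CondAstar n A aT bT κ := by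
    constructor
    · intro hdL d hd hdk
      set u := A.adjoint ⟨bT d, hd⟩ with hu
      have horth : ∀ x : L.domain, inner (𝕜 := ℂ) (x : H) u = 0 :=
        key1 u d hd hu.symm (fun j => hdk j)
      have hu0 : u = 0 := hdL.eq_zero_of_inner_right ℂ (fun v hv => horth ⟨v, hv⟩)
      have hb0 : bT d = 0 := by
        have h2' := h2 ⟨bT d, hd⟩
        rw [show A.adjoint ⟨bT d, hd⟩ = u from hu.symm, hu0, map_zero] at h2'
        exact h2'.symm
      have : bT d = bT 0 := by simpa using hb0
      exact hbInj this
    · intro hstar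
      rw [Submodule.dense_iff_topologicalClosure_eq_top,
        Submodule.topologicalClosure_eq_top_iff, Submodule.eq_bot_iff]
      intro u hu
      rw [Submodule.mem_orthogonal] at hu
      obtain ⟨d, hd, hval, hk⟩ := key2 u (fun x => hu (x : H) x.2)
      have hd0 : d = 0 := hstar d hd (fun j => by rw [hk j, hval])
      rw [← hval]
      have he : (⟨bT d, hd⟩ : A.adjoint.domain) = 0 := by
        apply Subtype.ext
        simp [hd0]
      rw [he]
      exact map_zero _
  refine ⟨hdense_iff, ?_⟩
  -- Part (2)
  intro hstar
  have hdL : Dense (L.domain : Set H) := hdense_iff.mpr hstar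
  have hLFA : ∀ (x : L.adjoint.domain) (y : L.domain),
      inner (𝕜 := ℂ) (L.adjoint x) (y : H) = inner (𝕜 := ℂ) (x : H) (L y) :=
    LinearPMap.adjoint_isFormalAdjoint hdL
  ext p
  obtain ⟨u, w⟩ := p
  constructor
  · -- graph L* ⊆ pertGraph of A*
    intro hmem
    rw [SetLike.mem_coe, LinearPMap.mem_graph_iff] at hmem
    obtain ⟨y, hy1, hy2⟩ := hmem
    have hy1' : (y : H) = u := hy1
    have hy2' : L.adjoint y = w := hy2
    have hprop : ∀ x : L.domain, inner (𝕜 := ℂ) w (x : H) = inner (𝕜 := ℂ) u (L x) := by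
      intro x
      rw [← hy1', ← hy2']
      exact hLFA y x
    obtain ⟨hBw, hBwval⟩ := h1 w
    obtain ⟨d, hdval⟩ : ∃ d, bT d = u - B w := by
      apply bmem_range'
      intro v hv
      rw [inner_sub_right]
      obtain ⟨hmemL, hvalL⟩ := hLmem' v 0 (fun j => by simpa using hv j)
      have hpr := hprop ⟨Ainv v + aT 0, hmemL⟩
      rw [hvalL] at hpr
      have hl : inner (𝕜 := ℂ) w (Ainv v) = inner (𝕜 := ℂ) u v := by simpa using hpr
      have hvu : inner (𝕜 := ℂ) v u = inner (𝕜 := ℂ) v (B w) := by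
        rw [hBv]
        calc inner (𝕜 := ℂ) v u
            = (starRingEnd ℂ) (inner (𝕜 := ℂ) u v) := (inner_conj_symm _ _).symm
          _ = (starRingEnd ℂ) (inner (𝕜 := ℂ) w (Ainv v)) := by rw [hl]
          _ = inner (𝕜 := ℂ) (Ainv v) w := inner_conj_symm _ _
      rw [hvu, sub_self]
    have hu' : u = B w + bT d := by rw [hdval]; abel
    have hconstr : ∀ c : Fin n → ℂ,
        ∑ j, (starRingEnd ℂ) (c j) *
          (κ.conjTranspose.mulVec d j + inner (𝕜 := ℂ) (aT (Pi.single j 1)) w) = 0 := by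
      intro c
      obtain ⟨v, hv⟩ := hbSurj (fun j => -(κ.mulVec c j))
      obtain ⟨hmemL, hvalL⟩ := hLmem' v c (fun j => by rw [hv j]; ring)
      have hp := hprop ⟨Ainv v + aT c, hmemL⟩
      rw [hvalL, inner_add_right] at hp
      rw [hu', inner_add_left] at hp
      rw [hBv' v w] at hp
      have h5 : inner (𝕜 := ℂ) w (aT c) = inner (𝕜 := ℂ) (bT d) v := by
        have := hp
        -- hp : ⟪w, Ainv v⟫ + ⟪w, aT c⟫ = ⟪w, Ainv v⟫ + ⟪bT d, v⟫
        exact add_left_cancel this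
      have hlhs : inner (𝕜 := ℂ) w (aT c)
          = ∑ j, c j * inner (𝕜 := ℂ) w (aT (Pi.single j 1)) := inner_comb_right' aT c w
      have hrhs : inner (𝕜 := ℂ) (bT d) v
          = ∑ j, (starRingEnd ℂ) (d j) * (-(κ.mulVec c j)) := by
        rw [inner_comb_left' bT d v]
        exact Finset.sum_congr rfl fun j _ => by rw [hv j]
      have h6 : inner (𝕜 := ℂ) (aT c) w
          = -(∑ j, (starRingEnd ℂ) (c j) * κ.conjTranspose.mulVec d j) := by
        calc inner (𝕜 := ℂ) (aT c) w
            = (starRingEnd ℂ) (inner (𝕜 := ℂ) w (aT c)) := (inner_conj_symm _ _).symm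
          _ = (starRingEnd ℂ) (∑ j, (starRingEnd ℂ) (d j) * (-(κ.mulVec c j))) := by
              rw [h5, hrhs]
          _ = ∑ j, d j * (starRingEnd ℂ) (-(κ.mulVec c j)) := by
              rw [map_sum]
              exact Finset.sum_congr rfl fun j _ => by rw [map_mul, Complex.conj_conj]
          _ = -∑ j, d j * (starRingEnd ℂ) (κ.mulVec c j) := by simp [map_neg, mul_neg]
          _ = -(∑ j, (starRingEnd ℂ) (c j) * κ.conjTranspose.mulVec d j) := by
              rw [alg2' κ c d]
      have h7 : inner (𝕜 := ℂ) (aT c) w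
          = ∑ j, (starRingEnd ℂ) (c j) * inner (𝕜 := ℂ) (aT (Pi.single j 1)) w :=
        inner_comb_left' aT c w
      simp only [mul_add]
      rw [Finset.sum_add_distrib, ← h7, h6]
      ring
    refine ⟨⟨B w, hBw⟩, d, ?_, ?_, ?_⟩
    · exact hu'
    · exact hBwval.symm
    · intro j
      have hc := hconstr (Pi.single j 1)
      rw [single_sum'] at hc
      show κ.conjTranspose.mulVec d j
        + inner (𝕜 := ℂ) (aT (Pi.single j 1)) (A.adjoint ⟨B w, hBw⟩) = 0
      rw [hBwval]
      exact hc
  · -- pertGraph of A* ⊆ graph L*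
    intro hmem
    obtain ⟨u₀, d, hp1, hp2, hp3⟩ := hmem
    have hp1' : u = (u₀ : H) + bT d := hp1
    have hp2' : w = A.adjoint u₀ := hp2
    have claim : ∀ x : L.domain, inner (𝕜 := ℂ) w (x : H) = inner (𝕜 := ℂ) u (L x) := by
      intro x
      obtain ⟨y₀, c, hx1, hx2, hcon⟩ := hLdecomp x
      have hbe : ∀ j, inner (𝕜 := ℂ) (bT (Pi.single j 1)) (A y₀) = -(κ.mulVec c j) :=
        fun j => eq_neg_of_add_eq_zero_right (hcon j)
      have hae : ∀ j, inner (𝕜 := ℂ) (aT (Pi.single j 1)) (A.adjoint u₀)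
          = -(κ.conjTranspose.mulVec d j) :=
        fun j => eq_neg_of_add_eq_zero_right (hp3 j)
      rw [hx1, hx2, hp1', hp2', inner_add_right, inner_add_left]
      have t1 : inner (𝕜 := ℂ) (A.adjoint u₀) (y₀ : H) = inner (𝕜 := ℂ) (u₀ : H) (A y₀) :=
        hFA u₀ y₀
      have t2 : inner (𝕜 := ℂ) (A.adjoint u₀) (aT c) = inner (𝕜 := ℂ) (bT d) (A y₀) := by
        rw [inner_comb_right' aT c _, inner_comb_left' bT d _]
        calc ∑ j, c j * inner (𝕜 := ℂ) (A.adjoint u₀) (aT (Pi.single j 1))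
            = ∑ j, c j * (starRingEnd ℂ) (-(κ.conjTranspose.mulVec d j)) := by
              refine Finset.sum_congr rfl fun j _ => ?_
              rw [← inner_conj_symm, hae j]
          _ = -∑ j, c j * (starRingEnd ℂ) (κ.conjTranspose.mulVec d j) := by
              simp [map_neg, mul_neg]
          _ = -∑ j, (starRingEnd ℂ) (d j) * κ.mulVec c j := by rw [alg1' κ c d]
          _ = ∑ j, (starRingEnd ℂ) (d j) * (-(κ.mulVec c j)) := by simp [mul_neg]
          _ = ∑ j, (starRingEnd ℂ) (d j) * inner (𝕜 := ℂ) (bT (Pi.single j 1)) (A y₀) := by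
              refine Finset.sum_congr rfl fun j _ => ?_
              rw [hbe j]
      rw [t1, t2]
    have hmemAdj : u ∈ L.adjoint.domain :=
      LinearPMap.mem_adjoint_domain_of_exists u ⟨w, claim⟩
    have hvalAdj : L.adjoint ⟨u, hmemAdj⟩ = w :=
      LinearPMap.adjoint_apply_eq hdL ⟨u, hmemAdj⟩ claim
    rw [SetLike.mem_coe, LinearPMap.mem_graph_iff]
    exact ⟨⟨u, hmemAdj⟩, rfl, hvalAdj⟩


end
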